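/- Let m ≥ 1, σ ≥ 0, n ≥ 1, g ∈ ℝ^m and d = (A_σ^{(n)})^{-1} g. Then ‖g‖² = ‖d‖² + 2σ‖D₊^n d‖² + σ²‖L^n d‖², where ‖·‖ is the Euclidean norm. -/

import Mathlib

open Matrix

/-- The `m × m` periodic forward finite difference matrix `D₊`. -/
noncomputable def Dplus (m : ℕ) [NeZero m] : Matrix (Fin m) (Fin m) ℝ :=
  Matrix.of fun i j => if j = i then -1 else if j = i + 1 then 1 else 0

/-- The periodic backward finite difference matrix `D₋ = -D₊ᵀ`. -/
noncomputable def Dminus (m : ℕ) [NeZero m] : Matrix (Fin m) (Fin m) ℝ := -(Dplus m)ᵀ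

/-- The periodic one-dimensional discrete Laplacian `L = D₋ D₊`. -/
noncomputable def Lap (m : ℕ) [NeZero m] : Matrix (Fin m) (Fin m) ℝ := Dminus m * Dplus m

/-- The Laplacian smoothing matrix `A_σ = I - σ L`. -/
noncomputable def MatA (m : ℕ) [NeZero m] (σ : ℝ) : Matrix (Fin m) (Fin m) ℝ :=
  1 - σ • Lap m

/-- The `n`-th order smoothing matrix `A_σ⁽ⁿ⁾ = I + (-1)ⁿ σ Lⁿ`. -/
noncomputable def MatAn (m : ℕ) [NeZero m] (σ : ℝ) (n : ℕ) : Matrix (Fin m) (Fin m) ℝ :=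
  1 + ((-1 : ℝ) ^ n * σ) • Lap m ^ n
noncomputable def Shift (m : ℕ) [NeZero m] : Matrix (Fin m) (Fin m) ℝ :=
  Matrix.of fun i j => if j = i + 1 then 1 else 0

lemma shift_mul_shiftT (m : ℕ) [NeZero m] : Shift m * (Shift m)ᵀ = 1 := by
  ext i j
  simp only [mul_apply, transpose_apply, Shift, of_apply, ite_mul, one_mul, zero_mul,
    Finset.sum_ite_eq', Finset.mem_univ, if_true, one_apply]
  simp [add_left_inj]

lemma shiftT_mul_shift (m : ℕ) [NeZero m] : (Shift m)ᵀ * Shift m = 1 := by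
  ext i j
  have h1 : ∀ k : Fin m, (i = k + 1) ↔ (k = i - 1) := by
    intro k
    constructor
    · intro h; rw [h]; simp
    · intro h; rw [h]; simp
  simp only [mul_apply, transpose_apply, Shift, of_apply, ite_mul, one_mul, zero_mul, h1,
    Finset.sum_ite_eq', Finset.mem_univ, if_true, one_apply]
  have : i - 1 + 1 = i := by simp
  rw [this]
  simp [eq_comm]

lemma dplus_eq (m : ℕ) [NeZero m] (hm : 2 ≤ m) : Dplus m = Shift m - 1 := by
  have hm' : m ≠ 1 := by omega
  have h10 : (1 : Fin m) ≠ 0 := by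
    simp [Fin.one_eq_zero_iff, hm']
  have hne : ∀ i : Fin m, (i : Fin m) + 1 ≠ i := by
    intro i h
    nth_rewrite 2 [← add_zero i] at h
    exact h10 (add_left_cancel h)
  ext i j
  by_cases h : j = i
  · subst h
    simp [Dplus, Shift, one_apply, Ne.symm (hne j)]
  · by_cases h2 : j = i + 1
    · subst h2; simp [Dplus, Shift, one_apply, hne i, h, hm', fun hh => h (Eq.symm hh)]
    · simp [Dplus, Shift, one_apply, h, h2, Ne.symm h]

lemma dplus_comm (m : ℕ) [NeZero m] : Commute (Dplus m) (Dplus m)ᵀ := by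
  rcases le_or_gt 2 m with hm | hm
  · rw [dplus_eq m hm]
    unfold Commute SemiconjBy
    rw [transpose_sub, transpose_one]
    simp only [sub_mul, mul_sub, shift_mul_shiftT m, shiftT_mul_shift m, mul_one, one_mul]
    abel
  · interval_cases m
    · exact absurd rfl (NeZero.ne 0)
    · unfold Commute SemiconjBy
      ext i j
      have : i = 0 := Subsingleton.elim _ _
      have hj : j = 0 := Subsingleton.elim _ _
      subst this; subst hj
      simp [mul_apply, Fin.sum_univ_one, mul_comm]

lemma lap_eq (m : ℕ) [NeZero m] : Lap m = -((Dplus m)ᵀ * Dplus m) := by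
  simp [Lap, Dminus, neg_mul]

lemma lap_pow (m : ℕ) [NeZero m] (n : ℕ) :
    Lap m ^ n = ((-1 : ℝ) ^ n) • ((Dplus m ^ n)ᵀ * Dplus m ^ n) := by
  rw [lap_eq, ← neg_one_smul ℝ ((Dplus m)ᵀ * Dplus m), smul_pow,
    (dplus_comm m).symm.mul_pow, ← transpose_pow]

lemma matAn_eq (m : ℕ) [NeZero m] (σ : ℝ) (n : ℕ) :
    MatAn m σ n = 1 + σ • ((Dplus m ^ n)ᵀ * Dplus m ^ n) := by
  rw [MatAn, lap_pow, smul_smul]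
  congr 1
  rw [mul_comm ((-1:ℝ)^n) σ, mul_assoc, ← pow_add]
  simp [pow_mul]

lemma matAn_posDef (m : ℕ) [NeZero m] (σ : ℝ) (hσ : 0 ≤ σ) (n : ℕ) :
    (MatAn m σ n).PosDef := by
  rw [matAn_eq]
  apply Matrix.PosDef.add_posSemidef Matrix.PosDef.one
  have hpsd : ((Dplus m ^ n)ᵀ * Dplus m ^ n).PosSemidef := by
    have := Matrix.posSemidef_conjTranspose_mul_self (Dplus m ^ n)
    convert this using 2
    exact (Matrix.conjTranspose_eq_transpose_of_trivial _).symm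
  have herm : (σ • ((Dplus m ^ n)ᵀ * Dplus m ^ n)).IsHermitian := by
    rw [Matrix.IsHermitian, conjTranspose_smul, hpsd.1.eq, star_trivial]
  exact hpsd.smul hσ

/-- If `d = (A_σ⁽ⁿ⁾)⁻¹ g` then `‖g‖² = ‖d‖² + 2σ‖D₊ⁿ d‖² + σ²‖Lⁿ d‖²` (Euclidean norms,
written as sums of squares of coordinates). -/
theorem stmt10 (m : ℕ) [NeZero m] (σ : ℝ) (hσ : 0 ≤ σ) (n : ℕ) (hn : 1 ≤ n)
    (g d : Fin m → ℝ) (hd : d = (MatAn m σ n)⁻¹ *ᵥ g) :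
    ∑ i, g i ^ 2 = ∑ i, d i ^ 2 + 2 * σ * ∑ i, ((Dplus m ^ n) *ᵥ d) i ^ 2
      + σ ^ 2 * ∑ i, ((Lap m ^ n) *ᵥ d) i ^ 2 := by
  set B := Dplus m ^ n with hB
  set v := B *ᵥ d with hv
  set w := (Bᵀ * B) *ᵥ d with hw
  have hA : IsUnit (MatAn m σ n) := (matAn_posDef m σ hσ n).isUnit
  have hg : g = d + σ • w := by
    have : MatAn m σ n *ᵥ d = g := by
      rw [hd, mulVec_mulVec, Matrix.mul_nonsing_inv _ ((Matrix.isUnit_iff_isUnit_det _).mp hA),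
        one_mulVec]
    rw [← this, matAn_eq, add_mulVec, one_mulVec, smul_mulVec, hw]
  have hlap : ∀ i, ((Lap m ^ n) *ᵥ d) i ^ 2 = w i ^ 2 := by
    intro i
    rw [lap_pow, smul_mulVec]
    simp only [Pi.smul_apply, smul_eq_mul, mul_pow, ← hw]
    rw [← pow_mul, mul_comm n 2, pow_mul]
    norm_num
    rw [hw, hB, transpose_pow]
  have hdw : d ⬝ᵥ w = v ⬝ᵥ v := by
    rw [hw, ← mulVec_mulVec, dotProduct_mulVec, vecMul_transpose, ← hv]
  have key : g ⬝ᵥ g = d ⬝ᵥ d + 2 * σ * (v ⬝ᵥ v) + σ ^ 2 * (w ⬝ᵥ w) := by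
    rw [hg]
    simp only [add_dotProduct, dotProduct_add, smul_dotProduct, dotProduct_smul, smul_eq_mul]
    rw [dotProduct_comm w d, hdw]
    ring
  have hsq : ∀ x : Fin m → ℝ, x ⬝ᵥ x = ∑ i, x i ^ 2 := fun x => by
    simp [dotProduct, sq]
  calc ∑ i, g i ^ 2 = g ⬝ᵥ g := (hsq g).symm
    _ = d ⬝ᵥ d + 2 * σ * (v ⬝ᵥ v) + σ ^ 2 * (w ⬝ᵥ w) := key
    _ = _ := by rw [hsq, hsq, hsq]; congr 1; simp [hlap]
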